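/- The groups ℤ^ω, (⊕_ω ℤ) ⊕ ℤ^ω, and (⊕_ω ℤ)^ω are pairwise non-isomorphic abelian groups. In particular, ℤ^ω is not isomorphic to (⊕_ω ℤ)^ω. -/

import Mathlib

open Finset

theorem spk_tail (f : (ℕ → ℤ) →+ ℤ) :
    ∃ N : ℕ, ∀ x : ℕ → ℤ, (∀ n, n < N → x n = 0) → f x = 0 := by
  classical
  by_contra hcon
  push_neg at hcon
  choose u hu0 hu1 using hcon
  set c : ℕ → ℤ := fun m => f (u m) with hc
  set g : ℕ → ℤ × ℤ := fun m => Nat.rec (motive := fun _ => ℤ × ℤ)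
      (2, 2 * c 0)
      (fun m p => (p.1 * (2 * (|p.2| + (m : ℤ) + 2)),
        p.2 + p.1 * (2 * (|p.2| + (m : ℤ) + 2)) * c (m + 1))) m with hgdef
  set a : ℕ → ℤ := fun m => (g m).1 with ha
  set σ : ℕ → ℤ := fun m => (g m).2 with hσ
  have hg0 : g 0 = (2, 2 * c 0) := rfl
  have hgs : ∀ m, g (m + 1) = ((g m).1 * (2 * (|(g m).2| + (m : ℤ) + 2)),
      (g m).2 + (g m).1 * (2 * (|(g m).2| + (m : ℤ) + 2)) * c (m + 1)) := fun m => rfl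
  have ha0 : ∀ m, 0 < a m := by
    intro m
    induction m with
    | zero => norm_num [ha, hg0]
    | succ m ih =>
      have h2 : (0:ℤ) < 2 * (|σ m| + m + 2) := by positivity
      have : a (m+1) = a m * (2 * (|σ m| + m + 2)) := by
        simp only [ha, hσ, hgs m]
      rw [this]
      exact mul_pos ih h2
  have haS : ∀ m, 2 * (|σ m| + m + 2) ≤ a (m + 1) := by
    intro m
    have h1 : (1:ℤ) ≤ a m := ha0 m
    have h2 : (0:ℤ) < 2 * (|σ m| + m + 2) := by positivity
    have h3 : a (m+1) = a m * (2 * (|σ m| + m + 2)) := by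
      simp only [ha, hσ, hgs m]
    nlinarith
  have hσs : ∀ m, σ (m + 1) = σ m + a (m + 1) * c (m + 1) := by
    intro m
    simp only [hσ, ha, hgs m]
  have hdvd : ∀ M m, M ≤ m → a M ∣ a m := by
    intro M m h
    induction m, h using Nat.le_induction with
    | base => exact dvd_rfl
    | succ n hn ih =>
      refine ih.trans ⟨(2 * (|σ n| + n + 2)), ?_⟩
      simp only [ha, hσ, hgs n]
  have hσsum : ∀ m, σ m = ∑ k ∈ range (m + 1), a k * c k := by
    intro m
    induction m with
    | zero => simp [hσ, ha, hg0]
    | succ m ih => rw [Finset.sum_range_succ, ← ih, hσs m]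
  set d : ℕ → ℤ := fun n => ∑ m ∈ range (n + 1), a m * u m n with hd
  have hdext : ∀ n L, n < L → (∑ m ∈ range L, a m * u m n) = d n := by
    intro n L h
    rw [hd]
    refine (Finset.sum_subset (by simp [Finset.range_subset]; omega) ?_).symm
    intro m hm hnm
    simp only [Finset.mem_range] at hm hnm
    have : n < m := by omega
    rw [hu0 m n this, mul_zero]
  have key : ∀ M, a M ∣ f d - ∑ m ∈ range M, a m * c m := by
    intro M
    set w : ℕ → ℤ := fun n => ∑ m ∈ Ico M (max (n + 1) M), (a m / a M) * u m n with hw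
    have hsplit : ∀ n, d n - ∑ m ∈ range M, a m * u m n = a M * w n := by
      intro n
      have hL : n < max (n + 1) M := lt_of_lt_of_le (Nat.lt_succ_self n) (le_max_left _ _)
      rw [← hdext n (max (n + 1) M) hL]
      rw [← Finset.sum_range_add_sum_Ico _ (le_max_right (n + 1) M)]
      rw [hw, Finset.mul_sum]
      rw [add_sub_cancel_left]
      refine Finset.sum_congr rfl ?_
      intro m hm
      rw [Finset.mem_Ico] at hm
      rw [← mul_assoc, Int.mul_ediv_cancel' (hdvd M m hm.1)]
    have hdsum : d = (∑ m ∈ range M, a m • u m) + a M • w := by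
      funext n
      have := hsplit n
      simp only [Pi.add_apply, Pi.smul_apply, Finset.sum_apply, smul_eq_mul]
      linarith
    have : f d = (∑ m ∈ range M, a m * c m) + a M * f w := by
      rw [hdsum, map_add, map_sum]
      simp only [map_zsmul, smul_eq_mul, hc]
    exact ⟨f w, by linarith⟩
  have hzero : ∀ m, (f d).natAbs ≤ m → f d - σ m = 0 := by
    intro m hm
    have h1 : a (m + 1) ∣ f d - σ m := by
      have := key (m + 1)
      rwa [← hσsum m] at this
    have habs : |f d - σ m| < a (m + 1) := by
      have h3 : |f d - σ m| ≤ |f d| + |σ m| := abs_sub _ _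
      have h4 : |f d| = ((f d).natAbs : ℤ) := Int.abs_eq_natAbs _
      have h5 : ((f d).natAbs : ℤ) ≤ (m : ℤ) := by exact_mod_cast hm
      have := haS m
      have h6 : (0:ℤ) ≤ |σ m| := abs_nonneg _
      linarith
    refine Int.eq_zero_of_dvd_of_natAbs_lt_natAbs h1 ?_
    have hpos : 0 < a (m+1) := ha0 (m+1)
    have : |f d - σ m| < |a (m+1)| := by rwa [abs_of_pos hpos]
    rw [Int.abs_eq_natAbs, Int.abs_eq_natAbs] at this
    exact_mod_cast this
  have e1 := hzero (f d).natAbs le_rfl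
  have e2 := hzero ((f d).natAbs + 1) (Nat.le_succ _)
  have e3 : σ ((f d).natAbs + 1) = σ ((f d).natAbs) := by omega
  rw [hσs] at e3
  have : a ((f d).natAbs + 1) * c ((f d).natAbs + 1) = 0 := by linarith
  rcases mul_eq_zero.1 this with h | h
  · exact absurd h (ha0 ((f d).natAbs + 1)).ne'
  · exact hu1 _ h


theorem spk_rep (f : (ℕ → ℤ) →+ ℤ) (N : ℕ)
    (hN : ∀ x : ℕ → ℤ, (∀ n, n < N → x n = 0) → f x = 0) (x : ℕ → ℤ) :
    f x = ∑ n ∈ range N, x n * f (Pi.single n 1) := by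
  classical
  have h0 : f (x - ∑ n ∈ range N, x n • Pi.single n (1:ℤ)) = 0 := by
    apply hN
    intro k hk
    simp only [Pi.sub_apply, Finset.sum_apply, Pi.smul_apply, Pi.single_apply, smul_eq_mul,
      mul_ite, mul_one, mul_zero]
    rw [Finset.sum_ite_eq (range N) k x]
    simp [hk]
  rw [map_sub, map_sum] at h0
  simp only [map_zsmul, smul_eq_mul] at h0
  linarith [h0]

theorem spk_single_zero (f : (ℕ → ℤ) →+ ℤ) (N : ℕ)
    (hN : ∀ x : ℕ → ℤ, (∀ n, n < N → x n = 0) → f x = 0) {n : ℕ} (hn : N ≤ n) :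
    f (Pi.single n 1) = 0 := by
  apply hN
  intro k hk
  exact Pi.single_eq_of_ne (by omega) 1

theorem spk_eq (f g : (ℕ → ℤ) →+ ℤ)
    (h : ∀ n, f (Pi.single n 1) = g (Pi.single n 1)) : f = g := by
  obtain ⟨N, hN⟩ := spk_tail (f - g)
  ext x
  have := spk_rep (f - g) N hN x
  simp only [AddMonoidHom.sub_apply, h, sub_self, mul_zero, Finset.sum_const_zero] at this
  linarith

theorem spk_countable : Countable ((ℕ → ℤ) →+ ℤ) := by
  classical
  have key : ∀ f : (ℕ → ℤ) →+ ℤ, (Function.support fun n => f (Pi.single n 1)).Finite := by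
    intro f
    obtain ⟨N, hN⟩ := spk_tail f
    refine Set.Finite.subset (Set.finite_Iio N) ?_
    intro n hn
    simp only [Function.mem_support] at hn
    by_contra h
    simp only [Set.mem_Iio, not_lt] at h
    exact hn (spk_single_zero f N hN h)
  have hJ : Function.Injective
      (fun f : ((ℕ → ℤ) →+ ℤ) => Finsupp.ofSupportFinite _ (key f)) := by
    intro f g hfg
    refine spk_eq f g fun n => ?_
    have := congrArg (fun s : ℕ →₀ ℤ => s n) hfg
    exact this
  exact hJ.countable

theorem zomega_uncountable : ¬ Countable (ℕ → ℤ) := by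
  intro h
  obtain ⟨g, hg⟩ := exists_surjective_nat (ℕ → ℤ)
  obtain ⟨m, hm⟩ := hg (fun n => g n n + 1)
  have := congrFun hm m
  omega


noncomputable def phiC (c : ℕ → ℤ) : (ℕ →₀ ℤ) →+ ℤ :=
  Finsupp.liftAddHom (fun n => zmultiplesHom ℤ (c n))

theorem phiC_single (c : ℕ → ℤ) (n : ℕ) : phiC c (Finsupp.single n 1) = c n := by
  simp [phiC]

theorem part1 : IsEmpty ((ℕ → ℤ) ≃+ ((ℕ →₀ ℤ) × (ℕ → ℤ))) := by
  refine ⟨fun Φ => ?_⟩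
  have hinj : Function.Injective
      (fun c : ℕ → ℤ => (phiC c).comp ((AddMonoidHom.fst _ _).comp Φ.toAddMonoidHom)) := by
    intro c c' h
    funext n
    have h2 := congrArg (fun F : (ℕ → ℤ) →+ ℤ => F (Φ.symm (Finsupp.single n 1, 0))) h
    simpa [phiC_single] using h2
  haveI := spk_countable
  exact zomega_uncountable hinj.countable

theorem part2 : IsEmpty ((ℕ → ℤ) ≃+ (ℕ → (ℕ →₀ ℤ))) := by
  refine ⟨fun Φ => ?_⟩
  have hinj : Function.Injective
      (fun c : ℕ → ℤ => (phiC c).comp ((Pi.evalAddMonoidHom (fun _ : ℕ => (ℕ →₀ ℤ)) 0).comp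
        Φ.toAddMonoidHom)) := by
    intro c c' h
    funext n
    have h2 := congrArg
      (fun F : (ℕ → ℤ) →+ ℤ => F (Φ.symm (Pi.single 0 (Finsupp.single n 1)))) h
    simpa [phiC_single] using h2
  haveI := spk_countable
  exact zomega_uncountable hinj.countable

theorem rho_bound (ρ : (ℕ → ℤ) →+ (ℕ →₀ ℤ)) :
    ∃ K : ℕ, ∀ (x : ℕ → ℤ) (j : ℕ), K ≤ j → ρ x j = 0 := by
  classical
  set M : ℕ → ℕ → ℤ := fun j n => ρ (Pi.single n 1) j with hM
  have hrow : ∀ j, ∃ N, ∀ x : ℕ → ℤ, (∀ n, n < N → x n = 0) → ρ x j = 0 := by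
    intro j
    obtain ⟨N, hN⟩ := spk_tail ((Finsupp.applyAddHom j).comp ρ)
    exact ⟨N, fun x hx => hN x hx⟩
  choose N hN using hrow
  have hrep : ∀ j x, ρ x j = ∑ n ∈ range (N j), x n * M j n := by
    intro j x
    exact spk_rep ((Finsupp.applyAddHom j).comp ρ) (N j) (fun y hy => hN j y hy) x
  have hMzero : ∀ j n, N j ≤ n → M j n = 0 := by
    intro j n h
    have : ρ (Pi.single n 1) j = 0 := by
      apply hN j
      intro k hk
      exact Pi.single_eq_of_ne (by omega) 1
    exact this
  set Bad : Set ℕ := {j | ∃ n, M j n ≠ 0} with hBad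
  by_cases hfin : Bad.Finite
  · refine ⟨(hfin.toFinset.sup id) + 1, fun x j hj => ?_⟩
    have hjB : j ∉ Bad := by
      intro hmem
      have : j ≤ hfin.toFinset.sup id := Finset.le_sup (f := id) (hfin.mem_toFinset.2 hmem)
      omega
    have hz : ∀ n, M j n = 0 := by
      intro n
      by_contra h
      exact hjB ⟨n, h⟩
    rw [hrep j x]
    simp [hz]
  · exfalso
    have hbad : Bad.Infinite := hfin
    have hcol : ∀ n, {j | M j n ≠ 0}.Finite := fun n => (ρ (Pi.single n 1)).finite_support
    have hstepA : ∀ m, {j | ∃ n, m ≤ n ∧ M j n ≠ 0}.Infinite := by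
      intro m
      by_contra h
      rw [Set.not_infinite] at h
      apply hfin
      have hsub : Bad ⊆ {j | ∃ n, m ≤ n ∧ M j n ≠ 0} ∪ ⋃ n ∈ Set.Iio m, {j | M j n ≠ 0} := by
        rintro j ⟨n, hn⟩
        by_cases hm : m ≤ n
        · exact Or.inl ⟨n, hm, hn⟩
        · refine Or.inr ?_
          simp only [Set.mem_iUnion, Set.mem_setOf_eq, Set.mem_Iio]
          exact ⟨n, by omega, hn⟩
      exact Set.Finite.subset (h.union ((Set.finite_Iio m).biUnion (fun n _ => hcol n))) hsub
    set rowF : ℕ → Finset ℕ := fun j => (range (N j)).filter (fun n => M j n ≠ 0) with hrowF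
    have hmemrow : ∀ j n, M j n ≠ 0 → n ∈ rowF j := by
      intro j n h
      have : n < N j := by
        by_contra hc
        exact h (hMzero j n (by omega))
      simp [hrowF, this, h]
    set nmax : ℕ → ℕ := fun j => if h : (rowF j).Nonempty then (rowF j).max' h else 0 with hnmax
    have hnmax_eq : ∀ j (h : (rowF j).Nonempty), nmax j = (rowF j).max' h := by
      intro j h
      simp only [hnmax, dif_pos h]
    have hnmax_mem : ∀ j, (rowF j).Nonempty → M j (nmax j) ≠ 0 ∧ nmax j < N j := by
      intro j h
      have hmem : nmax j ∈ rowF j := by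
        rw [hnmax_eq j h]
        exact (rowF j).max'_mem h
      simp only [hrowF, Finset.mem_filter, Finset.mem_range] at hmem
      exact ⟨hmem.2, hmem.1⟩
    have hnmax_ge : ∀ j n, n ∈ rowF j → n ≤ nmax j := by
      intro j n h
      rw [hnmax_eq j ⟨n, h⟩]
      exact Finset.le_max' _ _ h
    have hnmax_top : ∀ j k, nmax j < k → M j k = 0 := by
      intro j k h
      by_contra hc
      exact absurd (hnmax_ge j k (hmemrow j k hc)) (by omega)
    have hpick : ∀ (m : ℕ) (used : Finset ℕ), ∃ j, j ∉ used ∧ ∃ n, m ≤ n ∧ M j n ≠ 0 := by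
      intro m used
      obtain ⟨j, hj, hju⟩ := (hstepA m).exists_notMem_finset used
      exact ⟨j, hju, hj⟩
    set pickJ : ℕ → Finset ℕ → ℕ := fun m used => (hpick m used).choose with hpickJ
    have hpick_spec : ∀ m used, pickJ m used ∉ used ∧ ∃ n, m ≤ n ∧ M (pickJ m used) n ≠ 0 :=
      fun m used => (hpick m used).choose_spec
    set step : ℕ × (ℕ → ℤ) × Finset ℕ → ℕ × (ℕ → ℤ) × Finset ℕ := fun s =>
      (nmax (pickJ s.1 s.2.2) + 1,
       Function.update s.2.1 (nmax (pickJ s.1 s.2.2))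
         (if (∑ n ∈ range (N (pickJ s.1 s.2.2)), s.2.1 n * M (pickJ s.1 s.2.2) n) = 0
          then 1 else 0),
       insert (pickJ s.1 s.2.2) s.2.2) with hstepdef
    set st : ℕ → ℕ × (ℕ → ℤ) × Finset ℕ := fun i => step^[i] (0, (fun _ => (0:ℤ)), ∅) with hst
    set mm : ℕ → ℕ := fun i => (st i).1 with hmmdef
    set xs : ℕ → (ℕ → ℤ) := fun i => (st i).2.1 with hxsdef
    set us : ℕ → Finset ℕ := fun i => (st i).2.2 with husdef
    set jj : ℕ → ℕ := fun i => pickJ (mm i) (us i) with hjjdef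
    set Sval : ℕ → ℤ := fun i => ∑ n ∈ range (N (jj i)), xs i n * M (jj i) n with hSvaldef
    set tval : ℕ → ℤ := fun i => if Sval i = 0 then 1 else 0 with htvaldef
    have hsucc : ∀ i, st (i + 1) = step (st i) := fun i => Function.iterate_succ_apply' step i _
    have hmm1 : ∀ i, mm (i + 1) = nmax (jj i) + 1 := fun i => congrArg Prod.fst (hsucc i)
    have hxs1 : ∀ i, xs (i + 1) = Function.update (xs i) (nmax (jj i)) (tval i) :=
      fun i => congrArg (fun s => s.2.1) (hsucc i)
    have hus1 : ∀ i, us (i + 1) = insert (jj i) (us i) :=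
      fun i => congrArg (fun s => s.2.2) (hsucc i)
    have hjfresh : ∀ i, jj i ∉ us i := fun i => (hpick_spec (mm i) (us i)).1
    have hjwit : ∀ i, ∃ n, mm i ≤ n ∧ M (jj i) n ≠ 0 := fun i => (hpick_spec (mm i) (us i)).2
    have hrow_ne : ∀ i, (rowF (jj i)).Nonempty := by
      intro i
      obtain ⟨n, _, hn⟩ := hjwit i
      exact ⟨n, hmemrow _ n hn⟩
    have hm_le : ∀ i, mm i ≤ nmax (jj i) := by
      intro i
      obtain ⟨n, hmn, hn⟩ := hjwit i
      exact le_trans hmn (hnmax_ge _ n (hmemrow _ n hn))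
    have hmm_strict : ∀ i, mm i < mm (i + 1) := by
      intro i
      rw [hmm1 i]
      exact Nat.lt_succ_of_le (hm_le i)
    have hmm_mono : ∀ i k, i ≤ k → mm i ≤ mm k := by
      intro i k h
      induction k, h using Nat.le_induction with
      | base => exact le_rfl
      | succ n hn ih => exact le_trans ih (le_of_lt (hmm_strict n))
    have hmm_ge : ∀ i, i ≤ mm i := by
      intro i
      induction i with
      | zero => omega
      | succ n ih => have := hmm_strict n; omega
    have hxs0 : ∀ i n, mm i ≤ n → xs i n = 0 := by
      intro i
      induction i with
      | zero => intro n _; rfl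
      | succ k ih =>
        intro n hn
        rw [hxs1 k]
        rw [hmm1 k] at hn
        rw [Function.update_of_ne (by omega)]
        exact ih n (by have := hm_le k; omega)
    have hstab : ∀ i k, i ≤ k → ∀ n, n < mm i → xs k n = xs i n := by
      intro i k h
      induction k, h using Nat.le_induction with
      | base => intro n _; rfl
      | succ l hl ih =>
        intro n hn
        rw [hxs1 l, Function.update_of_ne ?_, ih n hn]
        have h1 : mm i ≤ mm l := hmm_mono i l hl
        have h2 := hm_le l
        omega
    set X : ℕ → ℤ := fun n => xs (n + 1) n with hXdef
    have hXval : ∀ i n, n < mm (i + 1) → X n = xs (i + 1) n := by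
      intro i n hn
      show xs (n + 1) n = xs (i + 1) n
      rcases le_or_gt (n + 1) (i + 1) with h | h
      · have hn1 : n < mm (n + 1) := lt_of_lt_of_le (Nat.lt_succ_self n) (hmm_ge (n + 1))
        exact (hstab (n + 1) (i + 1) h n hn1).symm
      · exact hstab (i + 1) (n + 1) (by omega) n hn
    have hnm_lt_N : ∀ i, nmax (jj i) < N (jj i) := fun i => (hnmax_mem _ (hrow_ne i)).2
    have main : ∀ i, ρ X (jj i) ≠ 0 := by
      intro i
      have h1 : ρ X (jj i) = ∑ n ∈ range (N (jj i)), X n * M (jj i) n := hrep _ X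
      have hico : ∀ (y : ℕ → ℤ) (m : ℕ), nmax (jj i) < m →
          ∑ n ∈ Ico m (N (jj i)), y n * M (jj i) n = 0 := by
        intro y m hm
        apply Finset.sum_eq_zero
        intro n hn
        rw [Finset.mem_Ico] at hn
        rw [hnmax_top _ n (by omega), mul_zero]
      have hsplit : ∑ n ∈ range (N (jj i)), X n * M (jj i) n
          = ∑ n ∈ range (nmax (jj i) + 1), X n * M (jj i) n := by
        rw [← Finset.sum_range_add_sum_Ico _ (Nat.succ_le_of_lt (hnm_lt_N i))]
        rw [hico X (nmax (jj i) + 1) (Nat.lt_succ_self _), add_zero]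
      have hXn : ∀ n ∈ range (nmax (jj i) + 1), X n * M (jj i) n
          = (Function.update (xs i) (nmax (jj i)) (tval i)) n * M (jj i) n := by
        intro n hn
        rw [Finset.mem_range] at hn
        have hx : X n = xs (i + 1) n := hXval i n (by rw [hmm1 i]; omega)
        rw [hx, hxs1 i]
      have h2 : ∑ n ∈ range (nmax (jj i) + 1), X n * M (jj i) n
          = (∑ n ∈ range (nmax (jj i)), xs i n * M (jj i) n)
            + tval i * M (jj i) (nmax (jj i)) := by
        rw [Finset.sum_congr rfl hXn, Finset.sum_range_succ]
        congr 1
        · refine Finset.sum_congr rfl ?_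
          intro n hn
          rw [Finset.mem_range] at hn
          rw [Function.update_of_ne (by omega)]
        · rw [Function.update_self]
      have h3 : ∑ n ∈ range (nmax (jj i)), xs i n * M (jj i) n = Sval i := by
        rw [show Sval i = ∑ n ∈ range (N (jj i)), xs i n * M (jj i) n from rfl]
        rw [← Finset.sum_range_add_sum_Ico _ (le_of_lt (hnm_lt_N i))]
        have hz : ∑ n ∈ Ico (nmax (jj i)) (N (jj i)), xs i n * M (jj i) n = 0 := by
          apply Finset.sum_eq_zero
          intro n hn
          rw [Finset.mem_Ico] at hn
          rw [hxs0 i n (le_trans (hm_le i) hn.1), zero_mul]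
        rw [hz, add_zero]
      rw [h1, hsplit, h2, h3]
      by_cases hS : Sval i = 0
      · have ht : tval i = 1 := by rw [show tval i = if Sval i = 0 then 1 else 0 from rfl, if_pos hS]
        rw [hS, ht, zero_add, one_mul]
        exact (hnmax_mem _ (hrow_ne i)).1
      · have ht : tval i = 0 := by rw [show tval i = if Sval i = 0 then 1 else 0 from rfl, if_neg hS]
        rw [ht, zero_mul, add_zero]
        exact hS
    have husmono : ∀ i k, i ≤ k → us i ⊆ us k := by
      intro i k h
      induction k, h using Nat.le_induction with
      | base => exact subset_rfl
      | succ l hl ih =>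
        rw [hus1 l]
        exact ih.trans (Finset.subset_insert _ _)
    have hjj_inj : Function.Injective jj := by
      have hne : ∀ k i, k < i → jj k ≠ jj i := by
        intro k i h hkeq
        apply hjfresh i
        have hmem : jj k ∈ us (k + 1) := by
          rw [hus1 k]
          exact Finset.mem_insert_self _ _
        rw [← hkeq]
        exact husmono (k + 1) i h hmem
      intro k i h
      rcases lt_trichotomy k i with hlt | heq | hgt
      · exact absurd h (hne k i hlt)
      · exact heq
      · exact absurd h.symm (hne i k hgt)
    have hmem : ∀ i, jj i ∈ ((ρ X).support : Set ℕ) := by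
      intro i
      simp only [Finset.mem_coe, Finsupp.mem_support_iff]
      exact main i
    exact (Set.infinite_of_injective_forall_mem hjj_inj hmem) (ρ X).support.finite_toSet

theorem part3 : IsEmpty (((ℕ →₀ ℤ) × (ℕ → ℤ)) ≃+ (ℕ → (ℕ →₀ ℤ))) := by
  classical
  refine ⟨fun Φ => ?_⟩
  set ρ : ℕ → ((ℕ → ℤ) →+ (ℕ →₀ ℤ)) := fun n =>
    (Pi.evalAddMonoidHom (fun _ : ℕ => (ℕ →₀ ℤ)) n).comp
      (Φ.toAddMonoidHom.comp (AddMonoidHom.inr (ℕ →₀ ℤ) (ℕ → ℤ))) with hρ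
  choose K hK using fun n => rho_bound (ρ n)
  set g : (ℕ →₀ ℤ) → (ℕ → ℤ) := fun s => fun n => Φ (s, 0) n (K n) with hg
  have hsurj : Function.Surjective g := by
    intro t
    set y : ℕ → (ℕ →₀ ℤ) := fun n => Finsupp.single (K n) (t n) with hy
    refine ⟨(Φ.symm y).1, ?_⟩
    funext n
    have hpair : ((Φ.symm y).1, (0 : ℕ → ℤ)) = Φ.symm y - (0, (Φ.symm y).2) := by
      ext <;> simp
    have hzero : Φ (0, (Φ.symm y).2) n (K n) = 0 := by
      have : Φ (0, (Φ.symm y).2) n = ρ n (Φ.symm y).2 := rfl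
      rw [this]
      exact hK n (Φ.symm y).2 (K n) le_rfl
    show Φ ((Φ.symm y).1, (0 : ℕ → ℤ)) n (K n) = t n
    rw [hpair, map_sub, AddEquiv.apply_symm_apply]
    simp only [Pi.sub_apply, Finsupp.coe_sub]
    rw [hzero]
    simp [hy]
  exact zomega_uncountable hsurj.countable

/-- ℤ^ω, (⊕_ω ℤ) ⊕ ℤ^ω, and (⊕_ω ℤ)^ω are pairwise non-isomorphic. -/
theorem three_groups_pairwise_nonisomorphic :
    IsEmpty ((ℕ → ℤ) ≃+ ((ℕ →₀ ℤ) × (ℕ → ℤ))) ∧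
    IsEmpty ((ℕ → ℤ) ≃+ (ℕ → (ℕ →₀ ℤ))) ∧
    IsEmpty (((ℕ →₀ ℤ) × (ℕ → ℤ)) ≃+ (ℕ → (ℕ →₀ ℤ))) := by
  exact ⟨part1, part2, part3⟩
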